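/- Let θ=(k_r) be a lacunary sequence and f an unbounded modulus function that is not θ-compatible. Then there exists a sequence (B_k) of nonempty closed subsets of ℝ (with the usual metric) and B = {0} such that (B_k) is Wijsman θ-lacunary statistically convergent to B but not Wijsman θ-lacunary f-statistically convergent to B. Consequently, if every Wijsman θ-lacunary statistically convergent sequence of closed subsets of ℝ is Wijsman θ-lacunary f-statistically convergent to the same limit, then f is θ-compatible. -/
import Mathlib


open Filter Metric Set

/-- `f : ℝ → ℝ` is an (unbounded) modulus function (considered on `[0,∞)`):
`f x = 0 ↔ x = 0`, subadditive, increasing, continuous from the right at `0`,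
and unbounded. -/
def IsModulus (f : ℝ → ℝ) : Prop :=
  (∀ x ∈ Set.Ici (0:ℝ), 0 ≤ f x) ∧
  (∀ x ∈ Set.Ici (0:ℝ), (f x = 0 ↔ x = 0)) ∧
  (∀ x ∈ Set.Ici (0:ℝ), ∀ y ∈ Set.Ici (0:ℝ), f (x + y) ≤ f x + f y) ∧
  MonotoneOn f (Set.Ici (0:ℝ)) ∧
  ContinuousWithinAt f (Set.Ici (0:ℝ)) 0 ∧
  (∀ M : ℝ, ∃ x ∈ Set.Ici (0:ℝ), M < f x)

/-- `φ(ε) = limsup_n f(nε)/f(n)`. -/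
noncomputable def modPhi (f : ℝ → ℝ) (ε : ℝ) : ℝ :=
  Filter.limsup (fun n : ℕ => f ((n : ℝ) * ε) / f (n : ℝ)) Filter.atTop

/-- A modulus function is compatible if `φ(ε) → 0` as `ε → 0⁺`. -/
def Compatible (f : ℝ → ℝ) : Prop :=
  Filter.Tendsto (modPhi f) (nhdsWithin 0 (Set.Ioi 0)) (nhds 0)

/-- Wijsman statistical convergence of a sequence of subsets of a metric space. -/
def WijsmanStatConv {X : Type*} [MetricSpace X] (A : ℕ → Set X) (B : Set X) : Prop :=
  ∀ x : X, ∀ ε > (0:ℝ),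
    Filter.Tendsto (fun n : ℕ =>
      (((Finset.range n).filter
        (fun j => ε < |infDist x (A j) - infDist x B|)).card : ℝ) / (n : ℝ))
      Filter.atTop (nhds 0)

/-- Wijsman `f`-statistical convergence of a sequence of subsets of a metric space. -/
def WijsmanFStatConv {X : Type*} [MetricSpace X] (f : ℝ → ℝ) (A : ℕ → Set X)
    (B : Set X) : Prop :=
  ∀ x : X, ∀ ε > (0:ℝ),
    Filter.Tendsto (fun n : ℕ =>
      f ((((Finset.range n).filter
        (fun j => ε < |infDist x (A j) - infDist x B|)).card : ℝ)) / f (n : ℝ))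
      Filter.atTop (nhds 0)

/-- A real sequence is `f`-strong Cesàro convergent to `L`. -/
def FStrongCesaro (f : ℝ → ℝ) (x : ℕ → ℝ) (L : ℝ) : Prop :=
  Filter.Tendsto (fun n : ℕ =>
    f (∑ j ∈ Finset.range n, |x j - L|) / f (n : ℝ)) Filter.atTop (nhds 0)

/-- Wijsman `f`-strong Cesàro convergence. -/
def WijsmanFStrongCesaro {X : Type*} [MetricSpace X] (f : ℝ → ℝ) (A : ℕ → Set X)
    (B : Set X) : Prop :=
  ∀ x : X, FStrongCesaro f (fun j => infDist x (A j)) (infDist x B)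

/-- Wijsman strong Cesàro convergence (the case `f = id`). -/
def WijsmanStrongCesaro {X : Type*} [MetricSpace X] (A : ℕ → Set X) (B : Set X) : Prop :=
  ∀ x : X,
    Filter.Tendsto (fun n : ℕ =>
      (∑ j ∈ Finset.range n, |infDist x (A j) - infDist x B|) / (n : ℝ))
      Filter.atTop (nhds 0)

/-- A real sequence is uniformly integrable. -/
def UnifIntegrable (x : ℕ → ℝ) : Prop :=
  Filter.Tendsto (fun c : ℝ =>
    ⨆ n : ℕ, (∑ j ∈ Finset.range n, if c ≤ |x j| then |x j| else 0) / (n : ℝ))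
    Filter.atTop (nhds 0)

/-- Wijsman uniform integrability. -/
def WijsmanUnifIntegrable {X : Type*} [MetricSpace X] (A : ℕ → Set X) : Prop :=
  ∀ x : X, UnifIntegrable (fun j => infDist x (A j))

/-- A lacunary sequence: strictly increasing, starting at `0`,
with gaps `h_r = k_{r+1} - k_r → ∞`. -/
def IsLacunary (k : ℕ → ℕ) : Prop :=
  k 0 = 0 ∧ StrictMono k ∧
    Filter.Tendsto (fun r : ℕ => k (r + 1) - k r) Filter.atTop Filter.atTop

/-- The gaps `h_r` of a lacunary sequence. -/
def lacH (k : ℕ → ℕ) (r : ℕ) : ℕ := k (r + 1) - k r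

/-- The blocks `I_r = (k_r, k_{r+1}]` of a lacunary sequence. -/
def lacI (k : ℕ → ℕ) (r : ℕ) : Finset ℕ := Finset.Ioc (k r) (k (r + 1))

/-- `φ_θ(ε) = limsup_t f(h_t ε)/f(h_t)`. -/
noncomputable def modPhiTheta (f : ℝ → ℝ) (k : ℕ → ℕ) (ε : ℝ) : ℝ :=
  Filter.limsup (fun t : ℕ => f ((lacH k t : ℝ) * ε) / f ((lacH k t : ℝ))) Filter.atTop

/-- `f` is `θ`-compatible if `φ_θ(ε) → 0` as `ε → 0⁺`. -/
def ThetaCompatible (f : ℝ → ℝ) (k : ℕ → ℕ) : Prop :=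
  Filter.Tendsto (modPhiTheta f k) (nhdsWithin 0 (Set.Ioi 0)) (nhds 0)

/-- Wijsman `θ`-lacunary statistical convergence. -/
def WijsmanLacStatConv {X : Type*} [MetricSpace X] (k : ℕ → ℕ) (A : ℕ → Set X)
    (B : Set X) : Prop :=
  ∀ x : X, ∀ ε > (0:ℝ),
    Filter.Tendsto (fun r : ℕ =>
      (((lacI k r).filter
        (fun j => ε < |infDist x (A j) - infDist x B|)).card : ℝ) / (lacH k r : ℝ))
      Filter.atTop (nhds 0)

/-- Wijsman `θ`-lacunary `f`-statistical convergence. -/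
def WijsmanLacFStatConv {X : Type*} [MetricSpace X] (f : ℝ → ℝ) (k : ℕ → ℕ)
    (A : ℕ → Set X) (B : Set X) : Prop :=
  ∀ x : X, ∀ ε > (0:ℝ),
    Filter.Tendsto (fun r : ℕ =>
      f ((((lacI k r).filter
        (fun j => ε < |infDist x (A j) - infDist x B|)).card : ℝ)) / f ((lacH k r : ℝ)))
      Filter.atTop (nhds 0)

/-- Wijsman `θ`-lacunary `f`-strong Cesàro convergence. -/
def WijsmanLacFStrongCesaro {X : Type*} [MetricSpace X] (f : ℝ → ℝ) (k : ℕ → ℕ)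
    (A : ℕ → Set X) (B : Set X) : Prop :=
  ∀ x : X,
    Filter.Tendsto (fun r : ℕ =>
      f (∑ j ∈ lacI k r, |infDist x (A j) - infDist x B|) / f ((lacH k r : ℝ)))
      Filter.atTop (nhds 0)

/-- Wijsman `θ`-lacunary strong Cesàro convergence (the case `f = id`). -/
def WijsmanLacStrongCesaro {X : Type*} [MetricSpace X] (k : ℕ → ℕ)
    (A : ℕ → Set X) (B : Set X) : Prop :=
  ∀ x : X,
    Filter.Tendsto (fun r : ℕ =>
      (∑ j ∈ lacI k r, |infDist x (A j) - infDist x B|) / (lacH k r : ℝ))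
      Filter.atTop (nhds 0)

/-- A real sequence is `θ`-lacunary uniformly integrable. -/
def LacUnifIntegrable (k : ℕ → ℕ) (x : ℕ → ℝ) : Prop :=
  Filter.Tendsto (fun M : ℝ =>
    ⨆ t : ℕ, (∑ j ∈ lacI k t, if M ≤ |x j| then |x j| else 0) / (lacH k t : ℝ))
    Filter.atTop (nhds 0)

/-- Wijsman `θ`-lacunary uniform integrability. -/
def WijsmanLacUnifIntegrable {X : Type*} [MetricSpace X] (k : ℕ → ℕ)
    (A : ℕ → Set X) : Prop :=
  ∀ x : X, LacUnifIntegrable k (fun j => infDist x (A j))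


theorem exists_lac_stat_not_lac_fstat_of_not_thetaCompatible
    (k : ℕ → ℕ) (hk : IsLacunary k)
    (f : ℝ → ℝ) (hf : IsModulus f) (hnc : ¬ ThetaCompatible f k) :
    (∃ B : ℕ → Set ℝ, (∀ n, (B n).Nonempty ∧ IsClosed (B n)) ∧
      WijsmanLacStatConv k B ({0} : Set ℝ) ∧
      ¬ WijsmanLacFStatConv f k B ({0} : Set ℝ)) ∧
    ((∀ (C : ℕ → Set ℝ) (D : Set ℝ), (∀ n, (C n).Nonempty ∧ IsClosed (C n)) →
        D.Nonempty → IsClosed D → WijsmanLacStatConv k C D →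
        WijsmanLacFStatConv f k C D) →
      ThetaCompatible f k) := by
  classical
  obtain ⟨hf0, hfeq0, hfsub, hfmono, hfc0, hfunb⟩ := hf
  obtain ⟨hk0, hkmono, hktend⟩ := hk
  -- basic facts about the lacunary sequence
  have hH1 : ∀ r, 1 ≤ lacH k r := by
    intro r
    have := hkmono (show r < r + 1 by omega)
    unfold lacH
    omega
  have hHpos : ∀ r, (0:ℝ) < (lacH k r : ℝ) := by
    intro r
    exact_mod_cast Nat.lt_of_lt_of_le Nat.zero_lt_one (hH1 r)
  have hH1R : ∀ r, (1:ℝ) ≤ (lacH k r : ℝ) := by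
    intro r; exact_mod_cast hH1 r
  have hkadd : ∀ r, k r + lacH k r = k (r + 1) := by
    intro r
    have := (hkmono (show r < r + 1 by omega)).le
    unfold lacH
    omega
  -- f is positive at arguments ≥ 1
  have hf1 : 0 < f 1 := by
    rcases lt_or_eq_of_le (hf0 1 (by norm_num)) with h | h
    · exact h
    · exact absurd ((hfeq0 1 (by norm_num)).mp h.symm) one_ne_zero
  have hfposx : ∀ x : ℝ, 1 ≤ x → 0 < f x := by
    intro x hx
    exact lt_of_lt_of_le hf1 (hfmono (by norm_num) (Set.mem_Ici.mpr (by linarith)) hx)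
  have hfH : ∀ r, 0 < f ((lacH k r : ℝ)) := fun r => hfposx _ (hH1R r)
  -- the quotient sequence and its bounds
  have hu0 : ∀ (ε : ℝ), 0 ≤ ε → ∀ t,
      0 ≤ f ((lacH k t : ℝ) * ε) / f ((lacH k t : ℝ)) := by
    intro ε hε t
    exact div_nonneg (hf0 _ (Set.mem_Ici.mpr (mul_nonneg (Nat.cast_nonneg _) hε)))
      (hf0 _ (Set.mem_Ici.mpr (Nat.cast_nonneg _)))
  have hu1 : ∀ (ε : ℝ), 0 ≤ ε → ε ≤ 1 → ∀ t,
      f ((lacH k t : ℝ) * ε) / f ((lacH k t : ℝ)) ≤ 1 := by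
    intro ε hε0 hε1 t
    rw [div_le_one (hfH t)]
    exact hfmono (Set.mem_Ici.mpr (mul_nonneg (Nat.cast_nonneg _) hε0))
      (Set.mem_Ici.mpr (Nat.cast_nonneg _))
      (mul_le_of_le_one_right (Nat.cast_nonneg _) hε1)
  have humono : ∀ (a b : ℝ), 0 ≤ a → a ≤ b → ∀ t,
      f ((lacH k t : ℝ) * a) / f ((lacH k t : ℝ)) ≤
        f ((lacH k t : ℝ) * b) / f ((lacH k t : ℝ)) := by
    intro a b ha hab t
    apply (div_le_div_iff_of_pos_right (hfH t)).mpr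
    exact hfmono (Set.mem_Ici.mpr (mul_nonneg (Nat.cast_nonneg _) ha))
      (Set.mem_Ici.mpr (mul_nonneg (Nat.cast_nonneg _) (ha.trans hab)))
      (mul_le_mul_of_nonneg_left hab (Nat.cast_nonneg _))
  -- nonnegativity and monotonicity of φ_θ on (0,1]
  have hφ0 : ∀ ε : ℝ, 0 < ε → ε ≤ 1 → 0 ≤ modPhiTheta f k ε := by
    intro ε hε hε1
    exact le_limsup_of_frequently_le (Frequently.of_forall (fun t => hu0 ε hε.le t))
      ⟨1, Filter.eventually_map.mpr (Eventually.of_forall (fun t => hu1 ε hε.le hε1 t))⟩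
  have hφmono : ∀ a b : ℝ, 0 < a → a ≤ b → b ≤ 1 →
      modPhiTheta f k a ≤ modPhiTheta f k b := by
    intro a b ha hab hb1
    exact limsup_le_limsup (Eventually.of_forall (fun t => humono a b ha.le hab t))
      (isCoboundedUnder_le_of_eventually_le atTop (Eventually.of_forall (hu0 a ha.le)))
      ⟨1, Filter.eventually_map.mpr (Eventually.of_forall
        (fun t => hu1 b (ha.le.trans hab) hb1 t))⟩
  -- extract δ
  have hδex : ∃ δ > (0:ℝ), ∀ ε : ℝ, 0 < ε → ε ≤ 1 → δ ≤ modPhiTheta f k ε := by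
    by_contra h
    push_neg at h
    apply hnc
    unfold ThetaCompatible
    rw [Metric.tendsto_nhdsWithin_nhds]
    intro η hη
    obtain ⟨ε₀, hε₀, hε₀1, hφε₀⟩ := h η hη
    refine ⟨ε₀, hε₀, fun {x} hx hxd => ?_⟩
    have hx0 : 0 < x := hx
    rw [Real.dist_eq, sub_zero] at hxd ⊢
    have hxε : x ≤ ε₀ := (le_abs_self x).trans hxd.le
    have h1 : modPhiTheta f k x ≤ modPhiTheta f k ε₀ := hφmono x ε₀ hx0 hxε hε₀1
    have h2 : 0 ≤ modPhiTheta f k x := hφ0 x hx0 (hxε.trans hε₀1)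
    rw [abs_of_nonneg h2]
    linarith
  obtain ⟨δ, hδpos, hδφ⟩ := hδex
  -- frequently good blocks
  have hfreq : ∀ i N : ℕ, ∃ t, t ≥ N ∧
      δ/2 < f ((lacH k t : ℝ) * (1/((i:ℝ)+1))) / f ((lacH k t : ℝ)) := by
    intro i N
    have hεpos : (0:ℝ) < 1/((i:ℝ)+1) := by positivity
    have hεle : 1/((i:ℝ)+1) ≤ 1 := by
      rw [div_le_one (by positivity)]
      have : (0:ℝ) ≤ (i:ℝ) := Nat.cast_nonneg i
      linarith
    have h1 : δ ≤ modPhiTheta f k (1/((i:ℝ)+1)) := hδφ _ hεpos hεle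
    have h2 : ∃ᶠ t in atTop,
        δ/2 < f ((lacH k t : ℝ) * (1/((i:ℝ)+1))) / f ((lacH k t : ℝ)) :=
      frequently_lt_of_lt_limsup
        (isCoboundedUnder_le_of_eventually_le atTop
          (Eventually.of_forall (hu0 _ hεpos.le)))
        (lt_of_lt_of_le (by linarith) h1)
    exact frequently_atTop.mp h2 N
  -- build the increasing sequence of blocks
  obtain ⟨T, hTmono, hTQ⟩ : ∃ T : ℕ → ℕ, StrictMono T ∧ ∀ i,
      δ/2 < f ((lacH k (T i) : ℝ) * (1/((i:ℝ)+1))) / f ((lacH k (T i) : ℝ)) := by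
    choose g hg1 hg2 using hfreq
    refine ⟨fun i => Nat.rec (g 0 0) (fun i ti => g (i+1) (ti+1)) i,
      strictMono_nat_of_lt_succ (fun i => ?_), fun i => ?_⟩
    · exact Nat.lt_of_succ_le (hg1 (i+1) _)
    · cases i with
      | zero => exact hg2 0 0
      | succ n => exact hg2 (n+1) _
  -- the number of exceptional points in block T i
  set m : ℕ → ℕ := fun i => ⌈(lacH k (T i) : ℝ) / ((i:ℝ)+1)⌉₊ with hm_def
  have hm1 : ∀ i, 1 ≤ m i := by
    intro i
    exact Nat.one_le_iff_ne_zero.mpr (Nat.pos_iff_ne_zero.mp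
      (Nat.ceil_pos.mpr (div_pos (hHpos (T i)) (by positivity))))
  have hmle : ∀ i, m i ≤ lacH k (T i) := by
    intro i
    apply Nat.ceil_le.mpr
    exact div_le_self (hHpos (T i)).le (by
      have : (0:ℝ) ≤ (i:ℝ) := Nat.cast_nonneg i
      linarith)
  have hmge : ∀ i, (lacH k (T i) : ℝ) / ((i:ℝ)+1) ≤ (m i : ℝ) := fun i => Nat.le_ceil _
  have hmlt : ∀ i, (m i : ℝ) ≤ (lacH k (T i) : ℝ) / ((i:ℝ)+1) + 1 := by
    intro i
    exact le_of_lt (Nat.ceil_lt_add_one (by positivity))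
  have hfm : ∀ i, δ/2 * f ((lacH k (T i) : ℝ)) ≤ f ((m i : ℝ)) := by
    intro i
    have h1 : δ/2 * f ((lacH k (T i) : ℝ)) <
        f ((lacH k (T i) : ℝ) * (1/((i:ℝ)+1))) := (lt_div_iff₀ (hfH _)).mp (hTQ i)
    have h2 : f ((lacH k (T i) : ℝ) * (1/((i:ℝ)+1))) ≤ f ((m i : ℝ)) := by
      apply hfmono (Set.mem_Ici.mpr (by positivity)) (Set.mem_Ici.mpr (Nat.cast_nonneg _))
      rw [mul_one_div]
      exact hmge i
    linarith
  -- the sequence of sets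
  set P : ℕ → Prop := fun j => ∃ i, k (T i) < j ∧ j ≤ k (T i) + m i with hP_def
  obtain ⟨B, hB⟩ : ∃ B : ℕ → Set ℝ, ∀ j, B j = if P j then ({1} : Set ℝ) else {0} :=
    ⟨_, fun j => rfl⟩
  have hBprop : ∀ n, (B n).Nonempty ∧ IsClosed (B n) := by
    intro n
    rw [hB n]
    split
    · exact ⟨Set.singleton_nonempty _, isClosed_singleton⟩
    · exact ⟨Set.singleton_nonempty _, isClosed_singleton⟩
  -- disjointness of blocks
  have hdisj : ∀ r s j : ℕ, j ∈ lacI k r → j ∈ lacI k s → r = s := by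
    intro r s j hr hs
    simp only [lacI, Finset.mem_Ioc] at hr hs
    by_contra hne
    rcases Nat.lt_or_ge r s with h | h
    · have : k (r+1) ≤ k s := hkmono.monotone h
      omega
    · have h' : s < r := lt_of_le_of_ne h (Ne.symm hne)
      have : k (s+1) ≤ k r := hkmono.monotone h'
      omega
  -- membership of exceptional indices in their block
  have hPblock : ∀ j, P j → ∃ i, j ∈ lacI k (T i) ∧ k (T i) < j ∧ j ≤ k (T i) + m i := by
    intro j hj
    obtain ⟨i, h1, h2⟩ := hj
    refine ⟨i, ?_, h1, h2⟩
    simp only [lacI, Finset.mem_Ioc]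
    exact ⟨h1, h2.trans (by rw [← hkadd (T i)]; exact Nat.add_le_add_left (hmle i) _)⟩
  -- upper bound for the exceptional count
  have hsub1 : ∀ (x ε : ℝ), 0 < ε → ∀ i,
      ((lacI k (T i)).filter
        (fun j => ε < |infDist x (B j) - infDist x ({0} : Set ℝ)|))
        ⊆ Finset.Ioc (k (T i)) (k (T i) + m i) := by
    intro x ε hε i j hj
    rw [Finset.mem_filter] at hj
    obtain ⟨hjI, hjd⟩ := hj
    by_cases hP : P j
    · obtain ⟨i', hjI', h1, h2⟩ := hPblock j hP
      have hii : i' = i := hTmono.injective (hdisj _ _ _ hjI' hjI)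
      subst hii
      exact Finset.mem_Ioc.mpr ⟨h1, h2⟩
    · exfalso
      rw [hB j, if_neg hP, sub_self, abs_zero] at hjd
      linarith
  have hcard1 : ∀ (x ε : ℝ), 0 < ε → ∀ i,
      (((lacI k (T i)).filter
        (fun j => ε < |infDist x (B j) - infDist x ({0} : Set ℝ)|)).card) ≤ m i := by
    intro x ε hε i
    have := Finset.card_le_card (hsub1 x ε hε i)
    rwa [Nat.card_Ioc, Nat.add_sub_cancel_left] at this
  have hcard0 : ∀ (x ε : ℝ), 0 < ε → ∀ r, (∀ i, T i ≠ r) →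
      ((lacI k r).filter
        (fun j => ε < |infDist x (B j) - infDist x ({0} : Set ℝ)|)) = ∅ := by
    intro x ε hε r hr
    rw [Finset.eq_empty_iff_forall_notMem]
    intro j hj
    rw [Finset.mem_filter] at hj
    obtain ⟨hjI, hjd⟩ := hj
    by_cases hP : P j
    · obtain ⟨i, hjI', _, _⟩ := hPblock j hP
      exact hr i (hdisj _ _ _ hjI' hjI)
    · rw [hB j, if_neg hP, sub_self, abs_zero] at hjd
      linarith
  -- Wijsman lacunary statistical convergence
  have hstat : WijsmanLacStatConv k B ({0} : Set ℝ) := by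
    intro x ε hε
    rw [Metric.tendsto_atTop]
    intro η hη
    obtain ⟨i₀, hi₀⟩ := exists_nat_one_div_lt (half_pos hη)
    have hev : ∀ᶠ r in atTop, ⌈2/η⌉₊ ≤ k (r+1) - k r :=
      hktend.eventually_ge_atTop _
    obtain ⟨N₂, hN₂⟩ := eventually_atTop.mp hev
    refine ⟨max (T i₀) N₂, fun r hr => ?_⟩
    have hr1 : T i₀ ≤ r := le_trans (le_max_left _ _) hr
    have hr2 : N₂ ≤ r := le_trans (le_max_right _ _) hr
    have hHr : 2/η ≤ (lacH k r : ℝ) := by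
      refine le_trans (Nat.le_ceil _) ?_
      exact_mod_cast hN₂ r hr2
    have hHrpos := hHpos r
    have hHrne : (lacH k r : ℝ) ≠ 0 := ne_of_gt hHrpos
    rw [Real.dist_eq, sub_zero, abs_of_nonneg (by positivity)]
    by_cases hex : ∃ i, T i = r
    · obtain ⟨i, hi⟩ := hex
      subst hi
      have hi₀i : i₀ ≤ i := by
        by_contra hlt
        push_neg at hlt
        exact absurd hr1 (not_le.mpr (hTmono hlt))
      have hcle : ((((lacI k (T i)).filter
          (fun j => ε < |infDist x (B j) - infDist x ({0} : Set ℝ)|)).card : ℝ))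
          ≤ (m i : ℝ) := by exact_mod_cast hcard1 x ε hε i
      have e1 : ((((lacI k (T i)).filter
          (fun j => ε < |infDist x (B j) - infDist x ({0} : Set ℝ)|)).card : ℝ))
            / (lacH k (T i) : ℝ)
          ≤ ((lacH k (T i) : ℝ) / ((i:ℝ)+1) + 1) / (lacH k (T i) : ℝ) :=
        (div_le_div_iff_of_pos_right hHrpos).mpr (hcle.trans (hmlt i))
      have e2 : ((lacH k (T i) : ℝ) / ((i:ℝ)+1) + 1) / (lacH k (T i) : ℝ)
          = 1/((i:ℝ)+1) + 1/(lacH k (T i) : ℝ) := by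
        field_simp
      have e3 : 1/((i:ℝ)+1) ≤ 1/((i₀:ℝ)+1) := by
        apply one_div_le_one_div_of_le (by positivity)
        have : (i₀:ℝ) ≤ (i:ℝ) := Nat.cast_le.mpr hi₀i
        linarith
      have e4 : 1/(lacH k (T i) : ℝ) ≤ η/2 := by
        have h2η : (0:ℝ) < 2/η := by positivity
        have := one_div_le_one_div_of_le h2η hHr
        rwa [one_div_div] at this
      calc ((((lacI k (T i)).filter
          (fun j => ε < |infDist x (B j) - infDist x ({0} : Set ℝ)|)).card : ℝ))
            / (lacH k (T i) : ℝ)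
          ≤ 1/((i:ℝ)+1) + 1/(lacH k (T i) : ℝ) := by rw [← e2]; exact e1
        _ < η := by linarith
    · push_neg at hex
      rw [hcard0 x ε hε r hex]
      simpa using hη
  -- failure of f-statistical convergence
  have hnf : ¬ WijsmanLacFStatConv f k B ({0} : Set ℝ) := by
    intro hF
    have h2 := hF 0 (1/2) (by norm_num)
    rw [Metric.tendsto_atTop] at h2
    obtain ⟨N, hN⟩ := h2 (δ/2) (by linarith)
    have hNle : N ≤ T N := hTmono.le_apply
    have h3 := hN (T N) hNle
    rw [Real.dist_eq, sub_zero] at h3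
    have hsup : Finset.Ioc (k (T N)) (k (T N) + m N) ⊆
        (lacI k (T N)).filter
          (fun j => (1/2 : ℝ) < |infDist (0:ℝ) (B j) - infDist (0:ℝ) ({0} : Set ℝ)|) := by
      intro j hj
      rw [Finset.mem_Ioc] at hj
      refine Finset.mem_filter.mpr ⟨?_, ?_⟩
      · simp only [lacI, Finset.mem_Ioc]
        exact ⟨hj.1, hj.2.trans (by rw [← hkadd (T N)]; exact Nat.add_le_add_left (hmle N) _)⟩
      · rw [hB j, if_pos (⟨N, hj.1, hj.2⟩ : P j)]
        rw [Metric.infDist_singleton, Metric.infDist_singleton, Real.dist_eq, Real.dist_eq]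
        norm_num
    have hcge : (m N : ℝ) ≤ ((((lacI k (T N)).filter
        (fun j => (1/2 : ℝ) < |infDist (0:ℝ) (B j) - infDist (0:ℝ) ({0} : Set ℝ)|)).card : ℝ)) := by
      have := Finset.card_le_card hsup
      rw [Nat.card_Ioc, Nat.add_sub_cancel_left] at this
      exact_mod_cast this
    have hfc : δ/2 * f ((lacH k (T N) : ℝ)) ≤ f ((((lacI k (T N)).filter
        (fun j => (1/2 : ℝ) < |infDist (0:ℝ) (B j) - infDist (0:ℝ) ({0} : Set ℝ)|)).card : ℝ)) :=
      le_trans (hfm N) (hfmono (Set.mem_Ici.mpr (Nat.cast_nonneg _))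
        (Set.mem_Ici.mpr (Nat.cast_nonneg _)) hcge)
    have hge : δ/2 ≤ f ((((lacI k (T N)).filter
        (fun j => (1/2 : ℝ) < |infDist (0:ℝ) (B j) - infDist (0:ℝ) ({0} : Set ℝ)|)).card : ℝ))
          / f ((lacH k (T N) : ℝ)) := (le_div_iff₀ (hfH _)).mpr hfc
    have habs := le_abs_self (f ((((lacI k (T N)).filter
        (fun j => (1/2 : ℝ) < |infDist (0:ℝ) (B j) - infDist (0:ℝ) ({0} : Set ℝ)|)).card : ℝ))
          / f ((lacH k (T N) : ℝ)))
    linarith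
  refine ⟨⟨B, hBprop, hstat, hnf⟩, fun H => absurd
    (H B ({0} : Set ℝ) hBprop (Set.singleton_nonempty 0) isClosed_singleton hstat) hnf⟩
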